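/- (Generalized small gain theorem) Let {u_i^k}, i = 1,...,m, be nonnegative sequences, T an entrywise-nonnegative m×m real matrix with spectral radius ρ(T) < 1, β ∈ ℝ^m, and λ ∈ (0,1), such that for every N ∈ ℕ the vector u^{λ,N} := (|u_1|^{λ,N}, ..., |u_m|^{λ,N}) satisfies u^{λ,N} ≤ T u^{λ,N} + β entrywise. Then each |u_i|^λ := sup_{k≥0} u_i^k / λ^k is finite; in particular each u_i^k = O(λ^k). -/

import Mathlib

/-- the λ-weighted max norm over the first `N+1` terms of a sequence. -/
noncomputable def wnorm (w : ℕ → ℝ) (lam : ℝ) (N : ℕ) : ℝ :=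
  (Finset.range (N + 1)).sup' (by simp) (fun k => w k / lam ^ k)

attribute [local instance] Matrix.linftyOpNormedAddCommGroup Matrix.linftyOpNormedRing
  Matrix.linftyOpNormedAlgebra

private instance sgAux_complete {k : ℕ} : CompleteSpace (Matrix (Fin k) (Fin k) ℂ) :=
  FiniteDimensional.complete ℂ _

private lemma sgAux_pow_nonneg {m : ℕ} (T : Matrix (Fin m) (Fin m) ℝ)
    (hT : ∀ i j, 0 ≤ T i j) : ∀ p i j, 0 ≤ (T ^ p) i j := by
  intro p
  induction p with
  | zero =>
    intro i j
    rw [pow_zero, Matrix.one_apply]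
    split_ifs <;> norm_num
  | succ p ih =>
    intro i j
    rw [pow_succ, Matrix.mul_apply]
    exact Finset.sum_nonneg fun k _ => mul_nonneg (ih i k) (hT k j)

private lemma sgAux_mulVec_mono {m : ℕ} (A : Matrix (Fin m) (Fin m) ℝ)
    (hA : ∀ i j, 0 ≤ A i j) {a b : Fin m → ℝ} (h : ∀ j, a j ≤ b j) (i : Fin m) :
    A.mulVec a i ≤ A.mulVec b i := by
  simp only [Matrix.mulVec, dotProduct]
  exact Finset.sum_le_sum fun j _ => mul_le_mul_of_nonneg_left (h j) (hA i j)

private lemma sgAux_iterate {m : ℕ} (T : Matrix (Fin m) (Fin m) ℝ)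
    (hT : ∀ i j, 0 ≤ T i j) (x beta : Fin m → ℝ)
    (h : ∀ i, x i ≤ T.mulVec x i + beta i) :
    ∀ p i, x i ≤ (T ^ p).mulVec x i + ((∑ q ∈ Finset.range p, T ^ q).mulVec beta) i := by
  intro p
  induction p with
  | zero =>
    intro i
    simp [Matrix.one_mulVec, Matrix.zero_mulVec]
  | succ p ih =>
    intro i
    have h1 := ih i
    have h2 : (T ^ p).mulVec x i ≤ (T ^ p).mulVec (fun j => T.mulVec x j + beta j) i :=
      sgAux_mulVec_mono _ (sgAux_pow_nonneg T hT p) h i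
    have h3 : (T ^ p).mulVec (fun j => T.mulVec x j + beta j) i
        = (T ^ (p + 1)).mulVec x i + (T ^ p).mulVec beta i := by
      have : (fun j => T.mulVec x j + beta j) = T.mulVec x + beta := rfl
      rw [this, Matrix.mulVec_add, Matrix.mulVec_mulVec, ← pow_succ]
      simp
    have h4 : (∑ q ∈ Finset.range (p + 1), T ^ q).mulVec beta i
        = (∑ q ∈ Finset.range p, T ^ q).mulVec beta i + (T ^ p).mulVec beta i := by
      rw [Finset.sum_range_succ, Matrix.add_mulVec]
      simp
    rw [h4]
    linarith

/-- Generalized small gain theorem. -/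
theorem generalized_small_gain (m : ℕ) (u : Fin m → ℕ → ℝ)
    (hu : ∀ i k, 0 ≤ u i k)
    (T : Matrix (Fin m) (Fin m) ℝ) (hT : ∀ i j, 0 ≤ T i j)
    (hspec : ∀ μ ∈ spectrum ℂ (T.map (fun x => (x : ℂ))), ‖μ‖ < 1)
    (beta : Fin m → ℝ) (lam : ℝ) (hlam : 0 < lam ∧ lam < 1)
    (hineq : ∀ N : ℕ, ∀ i : Fin m,
      wnorm (u i) lam N ≤ (∑ j : Fin m, T i j * wnorm (u j) lam N) + beta i) :
    ∀ i : Fin m, BddAbove (Set.range fun k : ℕ => u i k / lam ^ k) := by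
  intro i₀
  haveI : Nonempty (Fin m) := ⟨i₀⟩
  haveI : Nontrivial (Matrix (Fin m) (Fin m) ℂ) :=
    inferInstanceAs (Nontrivial (Fin m → Fin m → ℂ))
  classical
  set M := T.map (fun x : ℝ => (x : ℂ)) with hM
  -- spectral radius < 1
  have hρ : spectralRadius ℂ M < 1 := by
    have h := spectrum.spectralRadius_lt_of_forall_lt (a := M) (r := 1)
      (fun z hz => by
        have := hspec z hz
        have hz' : ‖z‖ < 1 := this
        exact_mod_cast hz')
    simpa using h
  obtain ⟨r, hr1, hr2⟩ := exists_between hρ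
  have hGel := spectrum.pow_nnnorm_pow_one_div_tendsto_nhds_spectralRadius (a := M)
  have hev1 : ∀ᶠ n : ℕ in Filter.atTop, (‖M ^ n‖₊ : ENNReal) ^ (1 / (n : ℝ)) < r :=
    hGel.eventually_lt_const hr1
  have hev2 : ∀ᶠ n : ℕ in Filter.atTop, r ^ n < (1 / 2 : ENNReal) :=
    (ENNReal.tendsto_pow_atTop_nhds_zero_of_lt_one hr2).eventually_lt_const (by norm_num)
  obtain ⟨n, hn1, hn2, hn3⟩ :
      ∃ n : ℕ, 1 ≤ n ∧ (‖M ^ n‖₊ : ENNReal) ^ (1 / (n : ℝ)) < r ∧ r ^ n < (1 / 2 : ENNReal) := by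
    obtain ⟨n, h⟩ := ((Filter.eventually_ge_atTop 1).and (hev1.and hev2)).exists
    exact ⟨n, h.1, h.2.1, h.2.2⟩
  have hn0 : (n : ℝ) ≠ 0 := by exact_mod_cast Nat.one_le_iff_ne_zero.mp hn1
  have hMn : (‖M ^ n‖₊ : ENNReal) < 1 / 2 := by
    calc (‖M ^ n‖₊ : ENNReal)
        = ((‖M ^ n‖₊ : ENNReal) ^ (1 / (n : ℝ))) ^ (n : ℕ) := by
          rw [← ENNReal.rpow_natCast (((‖M ^ n‖₊ : ENNReal)) ^ (1 / (n : ℝ))) n,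
            ← ENNReal.rpow_mul, one_div, inv_mul_cancel₀ hn0, ENNReal.rpow_one]
      _ ≤ r ^ n := pow_le_pow_left' hn2.le n
      _ < 1 / 2 := hn3
  have hnorm : ‖M ^ n‖ < 1 / 2 := by
    have h2 : (‖M ^ n‖₊ : ENNReal) < ((1 / 2 : NNReal) : ENNReal) := by
      convert hMn using 2
      simp
    have := ENNReal.coe_lt_coe.mp h2
    calc ‖M ^ n‖ = ((‖M ^ n‖₊ : NNReal) : ℝ) := rfl
      _ < ((1 / 2 : NNReal) : ℝ) := by exact_mod_cast this
      _ = 1 / 2 := by norm_num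
  -- row sums of T^n are < 1/2
  have hMpow : M ^ n = (T ^ n).map (fun x : ℝ => (x : ℂ)) := by
    have h1 : M = Complex.ofRealHom.mapMatrix T := rfl
    have h2 : (T ^ n).map (fun x : ℝ => (x : ℂ)) = Complex.ofRealHom.mapMatrix (T ^ n) := rfl
    rw [h1, h2, ← map_pow]
  have hrow : ∀ i : Fin m, ∑ j, (T ^ n) i j ≤ ‖M ^ n‖ := by
    intro i
    have hle : (∑ j, ‖(M ^ n) i j‖₊ : NNReal) ≤ ‖M ^ n‖₊ := by
      rw [Matrix.linfty_opNNNorm_def]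
      exact Finset.le_sup (f := fun i => ∑ j, ‖(M ^ n) i j‖₊) (Finset.mem_univ i)
    have heq : ∀ j, ‖(M ^ n) i j‖ = (T ^ n) i j := by
      intro j
      rw [hMpow]
      simp only [Matrix.map_apply, Complex.norm_real]
      exact abs_of_nonneg (sgAux_pow_nonneg T hT n i j)
    calc ∑ j, (T ^ n) i j = ∑ j, ‖(M ^ n) i j‖ := by
          exact Finset.sum_congr rfl fun j _ => (heq j).symm
      _ = ((∑ j, ‖(M ^ n) i j‖₊ : NNReal) : ℝ) := by push_cast; rfl
      _ ≤ ((‖M ^ n‖₊ : NNReal) : ℝ) := by exact_mod_cast hle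
      _ = ‖M ^ n‖ := rfl
  have hrow' : ∀ i : Fin m, ∑ j, (T ^ n) i j ≤ 1 / 2 := fun i => (hrow i).trans hnorm.le
  -- the vectors x N
  set x : ℕ → Fin m → ℝ := fun N i => wnorm (u i) lam N with hx
  have hxnn : ∀ N i, 0 ≤ x N i := by
    intro N i
    have : u i 0 / lam ^ 0 ≤ x N i :=
      Finset.le_sup' (fun k => u i k / lam ^ k) (by simp)
    have h0 : 0 ≤ u i 0 / lam ^ 0 := by
      rw [pow_zero, div_one]; exact hu i 0
    linarith
  have hvec : ∀ N i, x N i ≤ T.mulVec (x N) i + beta i := by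
    intro N i
    have := hineq N i
    simpa [Matrix.mulVec, dotProduct] using this
  set S := ∑ q ∈ Finset.range n, T ^ q with hS
  set C := Finset.univ.sup' Finset.univ_nonempty (fun i => S.mulVec beta i) with hC
  have hCle : ∀ i, S.mulVec beta i ≤ C := fun i =>
    Finset.le_sup' _ (Finset.mem_univ i)
  -- uniform bound: max over i of x N i ≤ 2C
  have hbound : ∀ N i, x N i ≤ 2 * C := by
    intro N i
    set MX := Finset.univ.sup' Finset.univ_nonempty (x N) with hMX
    have hxle : ∀ j, x N j ≤ MX := fun j => Finset.le_sup' _ (Finset.mem_univ j)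
    have hMXnn : 0 ≤ MX := le_trans (hxnn N i) (hxle i)
    obtain ⟨i', -, hi'⟩ := Finset.exists_mem_eq_sup' Finset.univ_nonempty (x N)
    have key : MX ≤ 1 / 2 * MX + C := by
      have h1 := sgAux_iterate T hT (x N) beta (hvec N) n i'
      have h2 : (T ^ n).mulVec (x N) i' ≤ 1 / 2 * MX := by
        have : (T ^ n).mulVec (x N) i' ≤ ∑ j, (T ^ n) i' j * MX := by
          simp only [Matrix.mulVec, dotProduct]
          exact Finset.sum_le_sum fun j _ =>
            mul_le_mul_of_nonneg_left (hxle j) (sgAux_pow_nonneg T hT n i' j)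
        calc (T ^ n).mulVec (x N) i' ≤ ∑ j, (T ^ n) i' j * MX := this
          _ = (∑ j, (T ^ n) i' j) * MX := by rw [Finset.sum_mul]
          _ ≤ 1 / 2 * MX := mul_le_mul_of_nonneg_right (hrow' i') hMXnn
      have h3 := hCle i'
      rw [hMX, ← hi'] at *
      rw [← hi']
      linarith
    have : MX ≤ 2 * C := by linarith
    exact le_trans (hxle i) this
  -- conclude
  refine ⟨2 * C, ?_⟩
  rintro y ⟨k, rfl⟩
  have h1 : u i₀ k / lam ^ k ≤ x k i₀ :=
    Finset.le_sup' (fun j => u i₀ j / lam ^ j) (by simp)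
  exact le_trans h1 (hbound k i₀)
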